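/- For all positive integers d, r, k with r ≥ 2, every family of k-element sets with Littlestone dimension at most d and cardinality at least (rk)^d contains an r-sunflower. -/

import Mathlib

open Finset

variable {α : Type*}

/-- An `r`-sunflower: `r` distinct sets with pairwise equal intersections. -/
def IsSunflower [DecidableEq α] (r : ℕ) (𝒮 : Finset (Finset α)) : Prop :=
  𝒮.card = r ∧ ∃ C : Finset α, ∀ A ∈ 𝒮, ∀ B ∈ 𝒮, A ≠ B → A ∩ B = C

/-- The family `F` contains an `r`-sunflower. -/
def HasSunflower [DecidableEq α] (F : Finset (Finset α)) (r : ℕ) : Prop :=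
  ∃ 𝒮 ⊆ F, IsSunflower r 𝒮

/-- `F` shatters `S`: every subset of `S` is the trace of some member of `F` on `S`. -/
def ShattersFam [DecidableEq α] (F : Finset (Finset α)) (S : Finset α) : Prop :=
  ∀ B ⊆ S, ∃ A ∈ F, A ∩ S = B

/-- The VC-dimension of `F` is at most `d`. -/
def VCdimLE [DecidableEq α] (F : Finset (Finset α)) (d : ℕ) : Prop :=
  ∀ S : Finset α, ShattersFam F S → S.card ≤ d

/-- The Littlestone dimension of `F` is at most `d` (recursive definition). -/
def LdimLE [DecidableEq α] : ℕ → Finset (Finset α) → Prop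
  | 0, F => F.card ≤ 1
  | d + 1, F => F.card ≤ 1 ∨ ∀ x : α,
      LdimLE d ((F.filter (fun S => x ∈ S)).image (fun S => S.erase x)) ∨
      LdimLE d (F.filter (fun S => x ∉ S))

/-- `λ(G) ≥ l`: there are `l` distinct sets in `G` such that every pair has a
private common element, belonging to no other of the `l` sets. -/
def HasLambda [DecidableEq α] (G : Finset (Finset α)) (l : ℕ) : Prop :=
  ∃ S : Fin l → Finset α, (∀ i, S i ∈ G) ∧ Function.Injective S ∧
    ∀ i j : Fin l, i < j → ∃ v, v ∈ S i ∧ v ∈ S j ∧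
      ∀ t : Fin l, t ≠ i → t ≠ j → v ∉ S t

lemma myerase_comm [DecidableEq α] (s : Finset α) (a b : α) :
    (s.erase a).erase b = (s.erase b).erase a := by
  ext x; simp [mem_erase]; tauto

lemma myinsert_inter_insert [DecidableEq α] (a : α) (s t : Finset α) :
    insert a s ∩ insert a t = insert a (s ∩ t) := by
  ext x; simp [mem_inter, mem_insert]; tauto

lemma ldimLE_of_card_le_one [DecidableEq α] :
    ∀ (d : ℕ) (F : Finset (Finset α)), F.card ≤ 1 → LdimLE d F
  | 0, _, h => h
  | _+1, _, h => Or.inl h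

lemma ldimLE_mono [DecidableEq α] :
    ∀ (d : ℕ) {F G : Finset (Finset α)}, G ⊆ F → LdimLE d F → LdimLE d G := by
  intro d
  induction d with
  | zero => intro F G hs h; exact (card_le_card hs).trans h
  | succ d ih =>
    intro F G hs h
    rcases h with h | h
    · exact Or.inl ((card_le_card hs).trans h)
    · refine Or.inr fun x => ?_
      rcases h x with h' | h'
      · exact Or.inl (ih (image_subset_image (filter_subset_filter _ hs)) h')
      · exact Or.inr (ih (filter_subset_filter _ hs) h')

lemma ldimLE_erase [DecidableEq α] :
    ∀ (d : ℕ) (x : α) (F : Finset (Finset α)),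
      (∀ S ∈ F, x ∈ S) → LdimLE d F → LdimLE d (F.image (fun S => S.erase x)) := by
  intro d
  induction d with
  | zero => intro x F _ h; exact card_image_le.trans h
  | succ d ih =>
    intro x F hx h
    rcases h with h | h
    · exact Or.inl (card_image_le.trans h)
    · refine Or.inr fun y => ?_
      by_cases hyx : y = x
      · subst hyx
        refine Or.inl ?_
        have he : (F.image (fun S => S.erase y)).filter (fun S => y ∈ S) = ∅ := by
          refine filter_eq_empty_iff.mpr fun T hT => ?_
          simp only [mem_image] at hT
          obtain ⟨S, _, rfl⟩ := hT
          exact notMem_erase y S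
        rw [he, image_empty]
        exact ldimLE_of_card_le_one d ∅ (by simp)
      · have hfilt_in :
            (F.image (fun S => S.erase x)).filter (fun S => y ∈ S)
              = (F.filter (fun S => y ∈ S)).image (fun S => S.erase x) := by
          rw [filter_image]
          congr 1
          apply filter_congr
          intro S _
          simp [mem_erase, hyx, Ne.symm hyx]
        have hfilt_out :
            (F.image (fun S => S.erase x)).filter (fun S => y ∉ S)
              = (F.filter (fun S => y ∉ S)).image (fun S => S.erase x) := by
          rw [filter_image]
          congr 1
          apply filter_congr
          intro S _
          simp [mem_erase, hyx, Ne.symm hyx]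
        rcases h y with h' | h'
        · refine Or.inl ?_
          have key :
              ((F.image (fun S => S.erase x)).filter (fun S => y ∈ S)).image (fun S => S.erase y)
                = ((F.filter (fun S => y ∈ S)).image (fun S => S.erase y)).image
                    (fun S => S.erase x) := by
            rw [hfilt_in, image_image, image_image]
            apply image_congr
            intro S _
            exact myerase_comm S x y
          rw [key]
          refine ih x _ ?_ h'
          intro T hT
          simp only [mem_image, mem_filter] at hT
          obtain ⟨S, ⟨hSF, _⟩, rfl⟩ := hT
          exact mem_erase.mpr ⟨Ne.symm hyx, hx S hSF⟩
        · refine Or.inr ?_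
          rw [hfilt_out]
          exact ih x _ (fun S hS => hx S (mem_of_mem_filter S hS)) h'

lemma hasSunflower_mono [DecidableEq α] {r : ℕ} {F G : Finset (Finset α)} (h : G ⊆ F)
    (hs : HasSunflower G r) : HasSunflower F r := by
  obtain ⟨𝒮, h𝒮, hsf⟩ := hs
  exact ⟨𝒮, h𝒮.trans h, hsf⟩

lemma hasSunflower_lift [DecidableEq α] (x : α) (r : ℕ) (F : Finset (Finset α))
    (hx : ∀ S ∈ F, x ∈ S)
    (h : HasSunflower (F.image (fun S => S.erase x)) r) : HasSunflower F r := by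
  obtain ⟨𝒮, h𝒮F, hcard, C, hC⟩ := h
  have hnx : ∀ T ∈ 𝒮, x ∉ T := by
    intro T hT
    obtain ⟨S, _, rfl⟩ := mem_image.mp (h𝒮F hT)
    exact notMem_erase x S
  refine ⟨𝒮.image (fun T => insert x T), ?_, ?_, insert x C, ?_⟩
  · intro T' hT'
    obtain ⟨T, hT, rfl⟩ := mem_image.mp hT'
    obtain ⟨S, hSF, rfl⟩ := mem_image.mp (h𝒮F hT)
    rwa [insert_erase (hx S hSF)]
  · rw [← hcard]
    apply card_image_of_injOn
    intro a ha b hb hab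
    have : (insert x a).erase x = (insert x b).erase x := by simp only at hab; rw [hab]
    rwa [erase_insert (hnx a ha), erase_insert (hnx b hb)] at this
  · intro A' hA' B' hB' hne
    obtain ⟨A, hA, rfl⟩ := mem_image.mp hA'
    obtain ⟨B, hB, rfl⟩ := mem_image.mp hB'
    have hAB : A ≠ B := fun e => hne (by rw [e])
    rw [myinsert_inter_insert, hC A hA B hB hAB]

lemma sunflower_aux [DecidableEq α] (r : ℕ) (hr : 2 ≤ r) :
    ∀ (n d k : ℕ) (F : Finset (Finset α)), d + k ≤ n → 1 ≤ d → 1 ≤ k →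
      (∀ S ∈ F, S.card = k) → LdimLE d F → (r * k) ^ d ≤ F.card → HasSunflower F r := by
  intro n
  induction n with
  | zero => intro d k F hn hd hk; omega
  | succ n ih =>
    intro d k F hn hd hk hsz hls hcard
    obtain ⟨d', rfl⟩ : ∃ d', d = d' + 1 := ⟨d - 1, by omega⟩
    obtain ⟨k', rfl⟩ : ∃ k', k = k' + 1 := ⟨k - 1, by omega⟩
    by_cases hk1 : k' = 0
    · -- all sets are singletons; any r of them form a sunflower with empty core
      subst hk1
      have hrF : r ≤ F.card := by
        have h2 : (r * (0 + 1)) ^ 1 ≤ (r * (0 + 1)) ^ (d' + 1) :=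
          Nat.pow_le_pow_right (by omega) (by omega)
        simp only [pow_one] at h2
        omega
      obtain ⟨𝒮, h𝒮, hc⟩ := Finset.exists_subset_card_eq hrF
      refine ⟨𝒮, h𝒮, hc, ∅, ?_⟩
      intro A hA B hB hAB
      by_contra hne
      obtain ⟨v, hv⟩ := nonempty_iff_ne_empty.mpr hne
      obtain ⟨a, rfl⟩ := card_eq_one.mp (hsz A (h𝒮 hA))
      obtain ⟨b, rfl⟩ := card_eq_one.mp (hsz B (h𝒮 hB))
      rw [mem_inter, mem_singleton, mem_singleton] at hv
      exact hAB (by rw [← hv.1, ← hv.2])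
    · -- main case: k = k' + 1 with k' ≥ 1
      have hls' := hls
      -- maximal pairwise disjoint subfamily
      set T : Finset (Finset (Finset α)) :=
        F.powerset.filter (fun D => ∀ A ∈ D, ∀ B ∈ D, A ≠ B → A ∩ B = ∅) with hTdef
      have hTne : T.Nonempty := ⟨∅, by simp [hTdef]⟩
      obtain ⟨D, hDT, hDmax⟩ := Finset.exists_max_image T Finset.card hTne
      rw [hTdef, mem_filter, mem_powerset] at hDT
      obtain ⟨hDF, hDdisj⟩ := hDT
      by_cases hDr : r ≤ D.card
      · -- r pairwise disjoint sets: sunflower with empty core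
        obtain ⟨𝒮, h𝒮, hc⟩ := Finset.exists_subset_card_eq hDr
        exact ⟨𝒮, h𝒮.trans hDF, hc, ∅,
          fun A hA B hB hAB => hDdisj A (h𝒮 hA) B (h𝒮 hB) hAB⟩
      · -- every set meets Y, the union of D
        set Y : Finset α := D.biUnion id with hYdef
        have hYcard : Y.card + (k' + 1) ≤ r * (k' + 1) := by
          have h1 : Y.card ≤ ∑ A ∈ D, A.card := card_biUnion_le
          have h2 : ∑ A ∈ D, A.card = D.card * (k' + 1) := by
            rw [Finset.sum_congr rfl (fun A hA => hsz A (hDF hA)), sum_const, smul_eq_mul]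
          have h3 : (D.card + 1) * (k' + 1) ≤ r * (k' + 1) :=
            Nat.mul_le_mul_right _ (by omega)
          nlinarith
        have hmeet : ∀ S ∈ F, (S ∩ Y).Nonempty := by
          intro S hS
          by_cases hSD : S ∈ D
          · have hSY : S ⊆ Y := fun a ha => mem_biUnion.mpr ⟨S, hSD, ha⟩
            rw [inter_eq_left.mpr hSY]
            rw [← card_pos, hsz S hS]; omega
          · by_contra hne
            rw [not_nonempty_iff_eq_empty] at hne
            have hins : insert S D ∈ T := by
              rw [hTdef, mem_filter, mem_powerset]
              refine ⟨insert_subset hS hDF, ?_⟩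
              intro A hA B hB hAB
              rcases mem_insert.mp hA with rfl | hA' <;>
                rcases mem_insert.mp hB with rfl | hB'
              · exact absurd rfl hAB
              · have hBY : B ⊆ Y := fun a ha => mem_biUnion.mpr ⟨B, hB', ha⟩
                have : A ∩ B ⊆ A ∩ Y := inter_subset_inter (Subset.refl A) hBY
                rw [hne] at this
                exact subset_empty.mp this
              · have hAY : A ⊆ Y := fun a ha => mem_biUnion.mpr ⟨A, hA', ha⟩
                have : B ∩ A ⊆ B ∩ Y := inter_subset_inter (Subset.refl B) hAY
                rw [hne] at this
                rw [inter_comm]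
                exact subset_empty.mp this
              · exact hDdisj A hA' B hB' hAB
            have := hDmax _ hins
            rw [card_insert_of_notMem hSD] at this
            omega
        -- pigeonhole: some x lies in more than (r(k'+1))^d' sets of F
        have hFne : F.Nonempty := by
          rw [← card_pos]
          have : 0 < (r * (k' + 1)) ^ (d' + 1) := pow_pos (by omega) _
          omega
        obtain ⟨S₀, hS₀⟩ := hFne
        obtain ⟨x₀, hx₀⟩ := hmeet S₀ hS₀
        set f : Finset α → α :=
          fun S => if h : (S ∩ Y).Nonempty then h.choose else x₀ with hfdef
        have hfmem : ∀ S ∈ F, f S ∈ S ∩ Y := by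
          intro S hS
          rw [hfdef]
          simp only [dif_pos (hmeet S hS)]
          exact (hmeet S hS).choose_spec
        have hmaps : ∀ S ∈ F, f S ∈ Y := fun S hS => (mem_inter.mp (hfmem S hS)).2
        have hlt : Y.card * (r * (k' + 1)) ^ d' < F.card := by
          have hp : 0 < (r * (k' + 1)) ^ d' := pow_pos (by omega) _
          have h1 : Y.card * (r * (k' + 1)) ^ d' < (r * (k' + 1)) * (r * (k' + 1)) ^ d' :=
            Nat.mul_lt_mul_of_lt_of_le (by omega) le_rfl hp
          have h2 : (r * (k' + 1)) * (r * (k' + 1)) ^ d' = (r * (k' + 1)) ^ (d' + 1) := by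
            rw [pow_succ]; ring
          omega
        obtain ⟨x, hxY, hxfib⟩ :=
          Finset.exists_lt_card_fiber_of_mul_lt_card_of_maps_to hmaps hlt
        have hF1 : (r * (k' + 1)) ^ d' < (F.filter (fun S => x ∈ S)).card := by
          refine lt_of_lt_of_le hxfib (card_le_card ?_)
          intro S hS
          rw [mem_filter] at hS ⊢
          refine ⟨hS.1, ?_⟩
          have := hfmem S hS.1
          rw [hS.2] at this
          exact (mem_inter.mp this).1
        set F₁ : Finset (Finset α) := F.filter (fun S => x ∈ S) with hF₁def
        set N : Finset (Finset α) := F.filter (fun S => x ∉ S) with hNdef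
        set L : Finset (Finset α) := F₁.image (fun S => S.erase x) with hLdef
        have hxF₁ : ∀ S ∈ F₁, x ∈ S := fun S hS => (mem_filter.mp hS).2
        have hLcard : L.card = F₁.card := by
          rw [hLdef]
          apply card_image_of_injOn
          intro a ha b hb hab
          simp only at hab
          have := congrArg (insert x) hab
          rwa [insert_erase (hxF₁ a ha), insert_erase (hxF₁ b hb)] at this
        have hLsz : ∀ T' ∈ L, T'.card = k' := by
          intro T' hT'
          obtain ⟨S, hS, rfl⟩ := mem_image.mp hT'
          rw [card_erase_of_mem (hxF₁ S hS), hsz S (mem_of_mem_filter S hS)]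
          omega
        have hsplit : F₁.card + N.card = F.card :=
          card_filter_add_card_filter_not (fun S => x ∈ S)
        rcases hls with h | h
        · have h2 : 2 ≤ (r * (k' + 1)) ^ (d' + 1) := by
            have := Nat.le_self_pow (n := d' + 1) (by omega) (r * (k' + 1))
            nlinarith
          omega
        rcases h x with hA | hB
        · -- link has small Littlestone dimension
          rcases Nat.eq_zero_or_pos d' with rfl | hd'
          · have : L.card ≤ 1 := hA
            rw [pow_zero] at hF1
            omega
          · have hbound : (r * k') ^ d' ≤ L.card := by
              have h1 : (r * k') ^ d' ≤ (r * (k' + 1)) ^ d' :=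
                Nat.pow_le_pow_left (Nat.mul_le_mul_left r (by omega)) d'
              omega
            have hsun := ih d' k' L (by omega) (by omega) (by omega) hLsz hA hbound
            exact hasSunflower_mono (filter_subset _ F)
              (hasSunflower_lift x r F₁ hxF₁ hsun)
        · -- complement has small Littlestone dimension
          by_cases hN : 1 ≤ d' ∧ (r * (k' + 1)) ^ d' ≤ N.card
          · have hsun := ih d' (k' + 1) N (by omega) (by omega) (by omega)
              (fun S hS => hsz S (mem_of_mem_filter S hS)) hB hN.2
            exact hasSunflower_mono (filter_subset _ F) hsun
          · -- N is small; recurse on the link with the same d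
            have hL2 : (r * k') ^ (d' + 1) ≤ L.card := by
              rcases Nat.eq_zero_or_pos d' with rfl | hd'
              · have hN1 : N.card ≤ 1 := hB
                have e1 : (r * (k' + 1)) ^ (0 + 1) = r * k' + r := by ring
                have e2 : (r * k') ^ (0 + 1) = r * k' := by ring
                rw [e1] at hcard
                rw [e2]
                omega
              · have hNlt : N.card < (r * (k' + 1)) ^ d' := by
                  rcases not_and_or.mp hN with h' | h'
                  · omega
                  · omega
                have hkey : (r * k') ^ (d' + 1) + (r * (k' + 1)) ^ d'
                    ≤ (r * (k' + 1)) ^ (d' + 1) := by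
                  have hb1 : (r * k') ^ d' ≤ (r * (k' + 1)) ^ d' :=
                    Nat.pow_le_pow_left (Nat.mul_le_mul_left r (by omega)) d'
                  calc (r * k') ^ (d' + 1) + (r * (k' + 1)) ^ d'
                      = (r * k') ^ d' * (r * k') + (r * (k' + 1)) ^ d' := by rw [pow_succ]
                    _ ≤ (r * (k' + 1)) ^ d' * (r * k') + (r * (k' + 1)) ^ d' :=
                        Nat.add_le_add_right (Nat.mul_le_mul_right _ hb1) _
                    _ = (r * (k' + 1)) ^ d' * (r * k' + 1) := by ring
                    _ ≤ (r * (k' + 1)) ^ d' * (r * (k' + 1)) :=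
                        Nat.mul_le_mul_left _ (by nlinarith)
                    _ = (r * (k' + 1)) ^ (d' + 1) := by rw [pow_succ]
                omega
            have hLd : LdimLE (d' + 1) L :=
              ldimLE_erase _ x F₁ hxF₁ (ldimLE_mono _ (filter_subset _ F) hls')
            have hsun := ih (d' + 1) k' L (by omega) (by omega) (by omega) hLsz hLd hL2
            exact hasSunflower_mono (filter_subset _ F)
              (hasSunflower_lift x r F₁ hxF₁ hsun)

theorem littlestone_sunflower {α : Type*} [DecidableEq α] (d r k : ℕ)
    (hd : 1 ≤ d) (hr : 2 ≤ r) (hk : 1 ≤ k) (F : Finset (Finset α))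
    (hsz : ∀ S ∈ F, S.card = k) (hls : LdimLE d F)
    (hcard : (r * k) ^ d ≤ F.card) : HasSunflower F r :=
  sunflower_aux r hr (d + k) d k F le_rfl hd hk hsz hls hcard
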